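/- Every additive submonoid of the nonnegative cone of an ordered field generated by an increasing sequence is hereditarily atomic. -/

import Mathlib

/-- `a` is an atom of the additive submonoid `P`. -/
def IsAtomOf {K : Type*} [AddCommMonoid K] (P : AddSubmonoid K) (a : K) : Prop :=
  a ∈ P ∧ a ≠ 0 ∧ ∀ x ∈ P, ∀ y ∈ P, a = x + y → x = 0 ∨ y = 0

/-- `P` is atomic: every element is a finite sum of atoms. -/
def IsAtomicMonoid {K : Type*} [AddCommMonoid K] (P : AddSubmonoid K) : Prop :=
  ∀ x ∈ P, ∃ s : Multiset K, (∀ a ∈ s, IsAtomOf P a) ∧ s.sum = x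

/-- The set of factorizations of `x` into atoms of `P`. -/
def Factorizations {K : Type*} [AddCommMonoid K] (P : AddSubmonoid K) (x : K) :
    Set (Multiset K) :=
  {s | (∀ a ∈ s, IsAtomOf P a) ∧ s.sum = x}

/-- `P` is an FF-monoid. -/
def IsFFMonoid {K : Type*} [AddCommMonoid K] (P : AddSubmonoid K) : Prop :=
  IsAtomicMonoid P ∧ ∀ x ∈ P, (Factorizations P x).Finite

/-- `P` is a BF-monoid. -/
def IsBFMonoid {K : Type*} [AddCommMonoid K] (P : AddSubmonoid K) : Prop :=
  IsAtomicMonoid P ∧ ∀ x ∈ P, {n : ℕ | ∃ s ∈ Factorizations P x, Multiset.card s = n}.Finite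

section Aux

variable {K : Type*} [Field K] [LinearOrder K] [IsStrictOrderedRing K]

/-- The range of a monotone sequence is partially well ordered. -/
lemma range_monotone_isPWO (f : ℕ → K) (hf : Monotone f) : (Set.range f).IsPWO := by
  intro g
  choose h hh using fun n => (g n).2
  classical
  have hex : ∃ v, ∃ m, h m = v := ⟨h 0, 0, rfl⟩
  obtain ⟨m₀, hm₀⟩ := Nat.find_spec hex
  refine ⟨m₀, m₀ + 1, Nat.lt_succ_self _, ?_⟩
  show (g m₀ : K) ≤ g (m₀ + 1)
  rw [← hh m₀, ← hh (m₀ + 1)]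
  apply hf
  rw [hm₀]
  exact Nat.find_min' hex ⟨m₀ + 1, rfl⟩

lemma forall₂_le_sum_le {l₁ l₂ : List K} (h : List.Forall₂ (· ≤ ·) l₁ l₂) :
    l₁.sum ≤ l₂.sum := by
  induction h with
  | nil => simp
  | cons h₁ _ ih => simpa using add_le_add h₁ ih

lemma sublist_sum_le {l₁ l₂ : List K} (h : List.Sublist l₁ l₂) (hpos : ∀ a ∈ l₂, 0 ≤ a) :
    l₁.sum ≤ l₂.sum := by
  induction h with
  | slnil => simp
  | @cons l₁ l₂ a h ih =>
    have := ih (fun b hb => hpos b (List.mem_cons_of_mem _ hb))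
    have ha := hpos a List.mem_cons_self
    simp only [List.sum_cons]
    linarith
  | @cons_cons l₁ l₂ a h ih =>
    have := ih (fun b hb => hpos b (List.mem_cons_of_mem _ hb))
    simp only [List.sum_cons]
    linarith

lemma sublist_sum_lt {l₁ l₂ : List K} (h : List.Sublist l₁ l₂) (hpos : ∀ a ∈ l₂, 0 < a)
    (hlen : l₁.length < l₂.length) : l₁.sum < l₂.sum := by
  induction h with
  | slnil => simp at hlen
  | @cons l₁ l₂ a h ih =>
    have h1 : l₁.sum ≤ _ := sublist_sum_le h (fun b hb => (hpos b (List.mem_cons_of_mem _ hb)).le)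
    have ha := hpos a List.mem_cons_self
    simp only [List.sum_cons]
    linarith
  | @cons_cons l₁ l₂ a h ih =>
    simp only [List.length_cons, Nat.add_lt_add_iff_right] at hlen
    have := ih (fun b hb => hpos b (List.mem_cons_of_mem _ hb)) hlen
    simp only [List.sum_cons]
    linarith

/-- Key lemma: lengths of representations of `x` as sums of nonzero generator values
are bounded. -/
lemma gen_length_bound (f : ℕ → K) (hf : Monotone f) (hnn : ∀ n, 0 ≤ f n) (x : K) :
    ∃ N : ℕ, ∀ t : Multiset K, (∀ y ∈ t, y ∈ Set.range f ∧ y ≠ 0) → t.sum = x →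
      Multiset.card t ≤ N := by
  by_contra hcon
  push_neg at hcon
  choose G hG1 hG2 hG3 using hcon
  -- a sequence of representations of strictly increasing length
  let R : ℕ → Multiset K := fun j => Nat.rec (G 0) (fun _ prev => G (Multiset.card prev)) j
  have hRsucc : ∀ j, R (j + 1) = G (Multiset.card (R j)) := fun j => rfl
  have hRmem : ∀ j, ∀ y ∈ R j, y ∈ Set.range f ∧ y ≠ 0 := by
    intro j
    cases j with
    | zero => exact hG1 0
    | succ n => rw [hRsucc]; exact hG1 _
  have hRsum : ∀ j, (R j).sum = x := by
    intro j
    cases j with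
    | zero => exact hG2 0
    | succ n => rw [hRsucc]; exact hG2 _
  have hRcard : StrictMono fun j => Multiset.card (R j) := by
    apply strictMono_nat_of_lt_succ
    intro n
    rw [hRsucc]
    exact hG3 _
  -- the set of nonzero generator values
  set W : Set K := {y | y ∈ Set.range f ∧ y ≠ 0} with hW
  have hWpwo : W.IsPWO := (range_monotone_isPWO f hf).mono (fun y hy => hy.1)
  have hWpos : ∀ y ∈ W, 0 < y := by
    rintro y ⟨⟨n, rfl⟩, hy0⟩
    exact lt_of_le_of_ne (hnn n) (Ne.symm hy0)
  have higman := Set.PartiallyWellOrderedOn.partiallyWellOrderedOn_sublistForall₂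
    ((· ≤ ·) : K → K → Prop) hWpwo
  obtain ⟨m, n, hmn, hsub⟩ := higman (fun j => ⟨(R j).toList,
    (fun y hy => hRmem j y (by rwa [Multiset.mem_toList] at hy))⟩)
  change List.SublistForall₂ (· ≤ ·) (R m).toList (R n).toList at hsub
  rw [List.sublistForall₂_iff] at hsub
  obtain ⟨l, hfor, hsl⟩ := hsub
  have h1 : (R m).toList.sum ≤ l.sum := forall₂_le_sum_le hfor
  have hlen : l.length < (R n).toList.length := by
    rw [← hfor.length_eq, Multiset.length_toList, Multiset.length_toList]
    exact hRcard hmn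
  have h2 : l.sum < (R n).toList.sum := by
    refine sublist_sum_lt hsl ?_ hlen
    intro a ha
    exact hWpos a (hRmem n a (by rwa [Multiset.mem_toList] at ha))
  rw [Multiset.sum_toList, hRsum] at h1 h2
  exact absurd (h1.trans_lt h2) (lt_irrefl x)

/-- Any multiset of nonzero elements of the closure can be refined to a multiset of
nonzero generator values with the same sum and at least the same cardinality. -/
lemma refine_to_gens (f : ℕ → K) (s : Multiset K)
    (hs : ∀ a ∈ s, a ∈ AddSubmonoid.closure (Set.range f) ∧ a ≠ 0) :
    ∃ t : Multiset K, (∀ y ∈ t, y ∈ Set.range f ∧ y ≠ 0) ∧ t.sum = s.sum ∧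
      Multiset.card s ≤ Multiset.card t := by
  classical
  induction s using Multiset.induction with
  | empty => exact ⟨0, by simp, by simp, by simp⟩
  | cons a s ih =>
    obtain ⟨t, ht1, ht2, ht3⟩ := ih (fun b hb => hs b (Multiset.mem_cons_of_mem hb))
    obtain ⟨ha, ha0⟩ := hs a (Multiset.mem_cons_self a s)
    obtain ⟨u, hu1, hu2⟩ := AddSubmonoid.exists_multiset_of_mem_closure ha
    set u' : Multiset K := u.filter (· ≠ 0) with hu'
    have hsplit := Multiset.filter_add_not (fun y => y ≠ 0) u
    have hzero : (u.filter (fun y => ¬ y ≠ 0)).sum = 0 := by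
      have : ∀ y ∈ u.filter (fun y => ¬ y ≠ 0), y = 0 := by
        intro y hy
        have := (Multiset.mem_filter.mp hy).2
        simpa using this
      calc (u.filter (fun y => ¬ y ≠ 0)).sum
          = (Multiset.replicate (Multiset.card (u.filter (fun y => ¬ y ≠ 0))) (0 : K)).sum := by
            congr 1
            exact Multiset.eq_replicate_card.mpr this
        _ = 0 := by simp
    have hu'sum : u'.sum = a := by
      have := congrArg Multiset.sum hsplit
      rw [Multiset.sum_add, hzero, add_zero] at this
      rw [hu', this, hu2]
    have hu'ne : u' ≠ 0 := by
      intro h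
      rw [h, Multiset.sum_zero] at hu'sum
      exact ha0 hu'sum.symm
    have hcard : 1 ≤ Multiset.card u' := by
      rwa [Nat.one_le_iff_ne_zero, Ne, Multiset.card_eq_zero]
    refine ⟨u' + t, ?_, ?_, ?_⟩
    · intro y hy
      rcases Multiset.mem_add.mp hy with hy | hy
      · have := Multiset.mem_filter.mp hy
        exact ⟨hu1 y this.1, by simpa using this.2⟩
      · exact ht1 y hy
    · rw [Multiset.sum_add, hu'sum, ht2, Multiset.sum_cons]
    · rw [Multiset.card_add, Multiset.card_cons]
      omega

/-- Lengths of decompositions of `x` into nonzero elements of `P` are bounded. -/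
lemma P_length_bound (f : ℕ → K) (hf : Monotone f) (hnn : ∀ n, 0 ≤ f n)
    (P : AddSubmonoid K) (hgen : AddSubmonoid.closure (Set.range f) = P) (x : K) :
    ∃ N : ℕ, ∀ s : Multiset K, (∀ a ∈ s, a ∈ P ∧ a ≠ 0) → s.sum = x →
      Multiset.card s ≤ N := by
  obtain ⟨N, hN⟩ := gen_length_bound f hf hnn x
  refine ⟨N, fun s hs hsum => ?_⟩
  obtain ⟨t, ht1, ht2, ht3⟩ := refine_to_gens f s
    (fun a ha => ⟨by rw [hgen]; exact (hs a ha).1, (hs a ha).2⟩)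
  exact ht3.trans (hN t ht1 (by rw [ht2, hsum]))

end Aux

theorem increasing_positive_monoid_hereditarily_atomic {K : Type*} [Field K] [LinearOrder K] [IsStrictOrderedRing K]
    (f : ℕ → K) (hf : Monotone f) (hnn : ∀ n, 0 ≤ f n)
    (P : AddSubmonoid K) (hgen : AddSubmonoid.closure (Set.range f) = P) :
    ∀ Q : AddSubmonoid K, Q ≤ P → IsAtomicMonoid Q := by
  intro Q hQP x hxQ
  classical
  by_cases hx0 : x = 0
  · exact ⟨0, by simp, by simp [hx0]⟩
  obtain ⟨N, hN⟩ := P_length_bound f hf hnn P hgen x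
  set Pred : ℕ → Prop := fun n => ∃ s : Multiset K,
    (∀ a ∈ s, a ∈ Q ∧ a ≠ 0) ∧ s.sum = x ∧ Multiset.card s = n with hPred
  have hQtoP : ∀ s : Multiset K, (∀ a ∈ s, a ∈ Q ∧ a ≠ 0) →
      (∀ a ∈ s, a ∈ P ∧ a ≠ 0) :=
    fun s hs a ha => ⟨hQP (hs a ha).1, (hs a ha).2⟩
  have h1 : Pred 1 := ⟨{x}, by simpa using ⟨hxQ, hx0⟩, by simp, by simp⟩
  have hN1 : 1 ≤ N := by
    have := hN {x} (by simpa using ⟨hQP hxQ, hx0⟩) (by simp)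
    simpa using this
  have hmax : Pred (Nat.findGreatest Pred N) := Nat.findGreatest_spec hN1 h1
  obtain ⟨s, hsQ, hssum, hscard⟩ := hmax
  refine ⟨s, ?_, hssum⟩
  intro a ha
  refine ⟨(hsQ a ha).1, (hsQ a ha).2, ?_⟩
  intro y hy z hz hayz
  by_contra hcon
  push_neg at hcon
  -- build a longer decomposition
  set s' : Multiset K := y ::ₘ z ::ₘ s.erase a with hs'
  have hs'Q : ∀ b ∈ s', b ∈ Q ∧ b ≠ 0 := by
    intro b hb
    rcases Multiset.mem_cons.mp hb with rfl | hb
    · exact ⟨hy, hcon.1⟩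
    rcases Multiset.mem_cons.mp hb with rfl | hb
    · exact ⟨hz, hcon.2⟩
    · exact hsQ b (Multiset.mem_of_mem_erase hb)
  have hs'sum : s'.sum = x := by
    have hcons : a ::ₘ s.erase a = s := Multiset.cons_erase ha
    have : s.sum = a + (s.erase a).sum := by
      conv_lhs => rw [← hcons]
      rw [Multiset.sum_cons]
    rw [hs', Multiset.sum_cons, Multiset.sum_cons, ← add_assoc, ← hayz, ← this, hssum]
  have hs'card : Multiset.card s' = Multiset.card s + 1 := by
    have hcons : a ::ₘ s.erase a = s := Multiset.cons_erase ha
    have : Multiset.card s = Multiset.card (s.erase a) + 1 := by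
      conv_lhs => rw [← hcons]
      rw [Multiset.card_cons]
    rw [hs', Multiset.card_cons, Multiset.card_cons, this]
  have hle : Multiset.card s' ≤ N := hN s' (hQtoP s' hs'Q) hs'sum
  have hgt : Nat.findGreatest Pred N < Multiset.card s + 1 := by omega
  have := Nat.findGreatest_is_greatest hgt (by omega)
  exact this ⟨s', hs'Q, hs'sum, by omega⟩
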